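/- Let G be a finite connected unicyclic graph, i.e., a connected simple graph whose number of edges m equals its number of vertices n (equivalently, containing exactly one cycle). Then (Σ_{uv ∈ E(G)} ε₃(u;G)·ε₃(v;G)) / m ≤ (Σ_{u ∈ V(G)} ε₃(u;G)²) / n, that is, F₂(G)/m(G) ≤ F₁(G)/n(G). -/

import Mathlib

open SimpleGraph Finset

variable {V : Type*}

/-- The Fermat distance of a vertex triple: minimum over all vertices σ of
    `d(σ,u) + d(σ,v) + d(σ,w)`. -/
noncomputable def fermatDist (G : SimpleGraph V) (u v w : V) : ℕ :=
  ⨅ σ : V, (G.dist σ u + G.dist σ v + G.dist σ w)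

/-- The Fermat eccentricity `ε₃(u;G)`: maximum Fermat distance of triples containing `u`. -/
noncomputable def fermatEcc [Fintype V] (G : SimpleGraph V) (u : V) : ℕ :=
  Finset.univ.sup fun p : V × V => fermatDist G u p.1 p.2

/-- The ordinary eccentricity `ε₂(u;G)`. -/
noncomputable def ecc2 [Fintype V] (G : SimpleGraph V) (u : V) : ℕ :=
  Finset.univ.sup fun v => G.dist u v

/-- The diameter of `G`. -/
noncomputable def gdiam [Fintype V] (G : SimpleGraph V) : ℕ :=
  Finset.univ.sup fun p : V × V => G.dist p.1 p.2

/-- A central vertex: one minimizing the ordinary eccentricity. -/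
def isCentral [Fintype V] (G : SimpleGraph V) (c : V) : Prop :=
  ∀ u : V, ecc2 G c ≤ ecc2 G u

/-- The number of edges of `G`. -/
noncomputable def numEdges [Fintype V] (G : SimpleGraph V) : ℕ :=
  letI := Classical.decEq V
  letI := Classical.decRel G.Adj
  G.edgeFinset.card

/-- The first Zagreb–Fermat eccentricity index `F₁(G) = Σ_u ε₃(u)²`. -/
noncomputable def F1 [Fintype V] (G : SimpleGraph V) : ℕ :=
  ∑ u : V, (fermatEcc G u) ^ 2

/-- The second Zagreb–Fermat eccentricity index `F₂(G) = Σ_{uv ∈ E} ε₃(u)·ε₃(v)`. -/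
noncomputable def F2 [Fintype V] (G : SimpleGraph V) : ℕ :=
  letI := Classical.decEq V
  letI := Classical.decRel G.Adj
  ∑ e ∈ G.edgeFinset,
    Sym2.lift ⟨fun u v => fermatEcc G u * fermatEcc G v, fun _ _ => mul_comm _ _⟩ e

/-- `u` lies in the subtree `T_{v_i}` hanging off the `i`-th vertex of the path `P`:
its geodesic to every vertex of `P` passes through `P.getVert i`. -/
def inSubtree (G : SimpleGraph V) {a b : V} (P : G.Walk a b) (i : ℕ) (u : V) : Prop :=
  ∀ j ≤ P.length, G.dist u (P.getVert j) = G.dist u (P.getVert i) + G.dist (P.getVert i) (P.getVert j)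

/-- `ℓ_i`: the height of the subtree `T_{v_i}`. -/
noncomputable def subtreeHeight [Fintype V] (G : SimpleGraph V) {a b : V} (P : G.Walk a b)
    (i : ℕ) : ℕ :=
  letI := Classical.decPred (inSubtree G P i)
  Finset.univ.sup fun u => if inSubtree G P i u then G.dist (P.getVert i) u else 0


section Aux
variable {G : SimpleGraph V}

def resGraph (G : SimpleGraph V) (L : Finset V) : SimpleGraph V where
  Adj a b := G.Adj a b ∧ a ∈ L ∧ b ∈ L
  symm := ⟨fun _ _ h => ⟨h.1.symm, h.2.2, h.2.1⟩⟩
  loopless := ⟨fun a h => G.loopless.irrefl a h.1⟩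

lemma fermatDist_le (G : SimpleGraph V) (u v w σ : V) :
    fermatDist G u v w ≤ G.dist σ u + G.dist σ v + G.dist σ w :=
  ciInf_le (OrderBot.bddBelow _) σ

lemma le_fermatDist [Nonempty V] (G : SimpleGraph V) {u v w : V} {c : ℕ}
    (h : ∀ σ, c ≤ G.dist σ u + G.dist σ v + G.dist σ w) : c ≤ fermatDist G u v w :=
  le_ciInf h

lemma fermatDist_comm₁ (G : SimpleGraph V) (u v w : V) :
    fermatDist G u v w = fermatDist G v u w := by
  unfold fermatDist; congr 1; funext σ; ring

lemma fermatDist_comm₁₃ (G : SimpleGraph V) (u v w : V) :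
    fermatDist G u v w = fermatDist G w v u := by
  unfold fermatDist; congr 1; funext σ; ring

lemma fermatDist_le_fermatEcc [Fintype V] (G : SimpleGraph V) (u v w : V) :
    fermatDist G u v w ≤ fermatEcc G u := by
  have h := Finset.le_sup (f := fun p : V × V => fermatDist G u p.1 p.2)
    (s := (univ : Finset (V × V))) (mem_univ (v, w))
  exact h

lemma exists_opt_pair [Fintype V] [Nonempty V] (G : SimpleGraph V) (y : V) :
    ∃ p q : V, fermatEcc G y = fermatDist G y p q := by
  obtain ⟨b, _, hb⟩ := Finset.exists_mem_eq_sup (univ : Finset (V × V)) univ_nonempty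
    (fun p : V × V => fermatDist G y p.1 p.2)
  exact ⟨b.1, b.2, hb⟩

lemma exists_boundary {K : Finset V} {a b : V} (w : G.Walk a b) (ha : a ∈ K) (hb : b ∉ K) :
    ∃ u v, G.Adj u v ∧ u ∈ K ∧ v ∉ K := by
  induction w with
  | nil => exact absurd ha hb
  | @cons x' c b' h p ih =>
    by_cases hc : c ∈ K
    · exact ih hc hb
    · exact ⟨x', c, h, ha, hc⟩

lemma mem_support_of_cross {K : Finset V} {x y : V}
    (huniq : ∀ u v, G.Adj u v → u ∈ K → v ∉ K → u = x ∧ v = y)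
    {a b : V} (ha : a ∈ K) (hb : b ∉ K) (w : G.Walk a b) : y ∈ w.support := by
  induction w with
  | nil => exact absurd ha hb
  | @cons x' c b' h p ih =>
    by_cases hc : c ∈ K
    · exact List.mem_cons_of_mem _ (ih hc hb)
    · have hcy := (huniq x' c h ha hc).2
      subst hcy
      exact List.mem_cons_of_mem _ p.start_mem_support

lemma dist_split [DecidableEq V] (hG : G.Connected) {K : Finset V} {x y : V}
    (huniq : ∀ u v, G.Adj u v → u ∈ K → v ∉ K → u = x ∧ v = y)
    {a b : V} (ha : a ∈ K) (hb : b ∉ K) :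
    G.dist a y + G.dist y b ≤ G.dist a b := by
  obtain ⟨w, hw⟩ := hG.exists_walk_length_eq_dist a b
  have hy : y ∈ w.support := mem_support_of_cross huniq ha hb w
  have h1 : G.dist a y ≤ (w.takeUntil y hy).length := SimpleGraph.dist_le _
  have h2 : G.dist y b ≤ (w.dropUntil y hy).length := SimpleGraph.dist_le _
  have h3 : (w.takeUntil y hy).length + (w.dropUntil y hy).length = w.length := by
    rw [← SimpleGraph.Walk.length_append, SimpleGraph.Walk.take_spec]
  omega

lemma exists_pred {H : SimpleGraph V} {u₀ u : V} (h : H.Reachable u₀ u) (hne : u ≠ u₀) :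
    ∃ c, H.Adj u c ∧ H.dist u₀ c < H.dist u₀ u := by
  obtain ⟨w, hw⟩ := h.exists_walk_length_eq_dist
  have hrl : w.reverse.length = H.dist u₀ u := by rw [SimpleGraph.Walk.length_reverse, hw]
  cases hrev : w.reverse with
  | nil => exact absurd rfl hne
  | cons hadj p =>
    rename_i c
    refine ⟨c, hadj, ?_⟩
    have h1 : H.dist u₀ c ≤ p.reverse.length := SimpleGraph.dist_le _
    have h2 : p.length + 1 = H.dist u₀ u := by
      rw [← hrl, hrev, SimpleGraph.Walk.length_cons]
    rw [SimpleGraph.Walk.length_reverse] at h1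
    omega

/-- Per-component bound: each component `K` of the low-Fermat-eccentricity region
satisfies `2|K| ≤ Σ_{u∈K} deg u`. -/
lemma comp_bound [Fintype V] [DecidableEq V] [DecidableRel G.Adj] (hG : G.Connected) (t : ℕ)
    (hS : ∃ s : V, t < fermatEcc G s) (u₀ : V) (K : Finset V)
    (hu₀K : u₀ ∈ K)
    (hKL : ∀ u ∈ K, fermatEcc G u ≤ t)
    (hconn : ∀ v ∈ K, (resGraph G (univ.filter (fun u => fermatEcc G u ≤ t))).Reachable u₀ v)
    (hclose : ∀ u ∈ K, ∀ v, G.Adj u v → fermatEcc G v ≤ t → v ∈ K) :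
    2 * K.card ≤ ∑ u ∈ K, G.degree u := by
  classical
  have hNE : Nonempty V := hG.nonempty
  set L : Finset V := univ.filter (fun u => fermatEcc G u ≤ t) with hL
  set H : SimpleGraph V := resGraph G L with hH
  -- predecessor function within the component
  have hpred : ∀ u ∈ K.erase u₀, ∃ c, (G.Adj u c ∧ c ∈ K) ∧ H.dist u₀ c < H.dist u₀ u := by
    intro u hu
    obtain ⟨hne, huK⟩ := Finset.mem_erase.mp hu
    obtain ⟨c, hadj, hlt⟩ := exists_pred (hconn u huK) hne
    have hcK : c ∈ K := hclose u huK c hadj.1 (by simpa [hL] using hadj.2.2)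
    exact ⟨c, ⟨hadj.1, hcK⟩, hlt⟩
  choose pred hpred1 hpred2 using hpred
  -- internal ordered adjacent pairs
  set P : Finset (V × V) := (K ×ˢ (univ : Finset V)).filter (fun p => G.Adj p.1 p.2 ∧ p.2 ∈ K)
    with hP
  set BD : Finset (V × V) := (K ×ˢ (univ : Finset V)).filter (fun p => G.Adj p.1 p.2 ∧ p.2 ∉ K)
    with hBD
  set d : V → ℕ := H.dist u₀ with hd
  set pr : V → V := fun u => if h : u ∈ K.erase u₀ then pred u h else u with hpr
  have hprA : ∀ u ∈ K.erase u₀, G.Adj u (pr u) ∧ pr u ∈ K ∧ d (pr u) < d u := by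
    intro u hu
    simp only [hpr, dif_pos hu]
    exact ⟨(hpred1 u hu).1, (hpred1 u hu).2, hpred2 u hu⟩
  -- (1) 2*(|K|-1) ≤ |P|
  have h1 : 2 * (K.card - 1) ≤ P.card := by
    have hcard : ((K.erase u₀) ×ˢ (univ : Finset Bool)).card = 2 * (K.card - 1) := by
      rw [Finset.card_product, Finset.card_erase_of_mem hu₀K]
      simp [mul_comm]
    rw [← hcard]
    apply Finset.card_le_card_of_injOn (fun z => cond z.2 (z.1, pr z.1) (pr z.1, z.1))
    · intro z hz
      have hz1 : z.1 ∈ K.erase u₀ := (Finset.mem_product.mp hz).1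
      obtain ⟨hadj, hprK, -⟩ := hprA z.1 hz1
      have hz1K : z.1 ∈ K := Finset.mem_of_mem_erase hz1
      cases hb : z.2 <;>
        simp [hb, hP, Finset.mem_filter, Finset.mem_product, hz1K, hprK, hadj, hadj.symm]
    · intro z hz z' hz' heq
      have hz1 : z.1 ∈ K.erase u₀ := (Finset.mem_product.mp (Finset.mem_coe.mp hz)).1
      have hz1' : z'.1 ∈ K.erase u₀ := (Finset.mem_product.mp (Finset.mem_coe.mp hz')).1
      have hlt := (hprA z.1 hz1).2.2
      have hlt' := (hprA z'.1 hz1').2.2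
      obtain ⟨a, b⟩ := z; obtain ⟨a', b'⟩ := z'
      simp only at hlt hlt'
      cases b <;> cases b' <;>
          simp only [Bool.cond_true, Bool.cond_false, Prod.mk.injEq, and_true, true_and,
            Bool.false_eq_true, Bool.true_eq_false, and_false, false_and] at heq ⊢
      · exact heq.2
      · exfalso
        rw [heq.1] at hlt
        rw [← heq.2] at hlt'
        omega
      · exfalso
        rw [← heq.1] at hlt'
        rw [heq.2] at hlt
        omega
      · exact heq.1
  -- (2) sum identities
  have hPsum : P.card = ∑ u ∈ K, (univ.filter (fun v => G.Adj u v ∧ v ∈ K)).card := by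
    rw [hP, Finset.card_filter, Finset.sum_product]
    exact Finset.sum_congr rfl fun u _ => (Finset.card_filter _ _).symm
  have hBDsum : BD.card = ∑ u ∈ K, (univ.filter (fun v => G.Adj u v ∧ v ∉ K)).card := by
    rw [hBD, Finset.card_filter, Finset.sum_product]
    exact Finset.sum_congr rfl fun u _ => (Finset.card_filter _ _).symm
  have hdeg : ∀ u : V, G.degree u = (univ.filter (fun v => G.Adj u v ∧ v ∈ K)).card
      + (univ.filter (fun v => G.Adj u v ∧ v ∉ K)).card := by
    intro u
    have hsplit := Finset.card_filter_add_card_filter_not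
      (s := G.neighborFinset u) (p := fun v => v ∈ K)
    have e1 : (G.neighborFinset u).filter (fun v => v ∈ K)
        = univ.filter (fun v => G.Adj u v ∧ v ∈ K) := by
      ext v; simp [SimpleGraph.mem_neighborFinset]
    have e2 : (G.neighborFinset u).filter (fun v => ¬ v ∈ K)
        = univ.filter (fun v => G.Adj u v ∧ v ∉ K) := by
      ext v; simp [SimpleGraph.mem_neighborFinset]
    rw [e1, e2] at hsplit
    rw [← SimpleGraph.card_neighborFinset_eq_degree, ← hsplit]
  -- (3) at least two boundary pairs
  have h2 : 2 ≤ BD.card := by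
    obtain ⟨s₀, hs₀⟩ := hS
    have hs₀K : s₀ ∉ K := fun h => absurd (hKL s₀ h) (by omega)
    obtain ⟨w⟩ := hG.preconnected u₀ s₀
    obtain ⟨xa, xb, hadj0, haK, hbK⟩ := exists_boundary w hu₀K hs₀K
    have hmem : (xa, xb) ∈ BD := by
      simp [hBD, Finset.mem_filter, Finset.mem_product, hadj0, haK, hbK]
    by_contra hlt
    push_neg at hlt
    have hcard1 : BD.card = 1 := by
      have := Finset.card_pos.mpr ⟨_, hmem⟩; omega
    obtain ⟨z, hz⟩ := Finset.card_eq_one.mp hcard1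
    have hzmem : z ∈ BD := by rw [hz]; exact Finset.mem_singleton_self z
    have hxK : z.1 ∈ K := (Finset.mem_product.mp (Finset.mem_filter.mp hzmem).1).1
    have hadjxy : G.Adj z.1 z.2 := (Finset.mem_filter.mp hzmem).2.1
    have hyK : z.2 ∉ K := (Finset.mem_filter.mp hzmem).2.2
    have huniq : ∀ u v, G.Adj u v → u ∈ K → v ∉ K → u = z.1 ∧ v = z.2 := by
      intro u v h hu hv
      have hm : (u, v) ∈ BD := by
        simp [hBD, Finset.mem_filter, Finset.mem_product, h, hu, hv]
      rw [hz, Finset.mem_singleton] at hm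
      exact ⟨congrArg Prod.fst hm, congrArg Prod.snd hm⟩
    have hty : t < fermatEcc G z.2 := by
      by_contra hle; push_neg at hle
      exact hyK (hclose z.1 hxK z.2 hadjxy hle)
    obtain ⟨p, q, hpq⟩ := exists_opt_pair G z.2
    by_cases hpK : p ∈ K
    · have hcmp : fermatEcc G z.2 ≤ fermatEcc G p := by
        rw [hpq, fermatDist_comm₁ G z.2 p q]
        exact fermatDist_le_fermatEcc G p z.2 q
      have := hKL p hpK; omega
    by_cases hqK : q ∈ K
    · have hcmp : fermatEcc G z.2 ≤ fermatEcc G q := by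
        rw [hpq, fermatDist_comm₁₃ G z.2 p q]
        exact fermatDist_le_fermatEcc G q p z.2
      have := hKL q hqK; omega
    have key : fermatEcc G z.2 ≤ fermatDist G z.1 p q := by
      rw [hpq]
      apply le_fermatDist
      intro σ
      by_cases hσ : σ ∈ K
      · have hp' := dist_split hG huniq hσ hpK
        have hq' := dist_split hG huniq hσ hqK
        have hbase := fermatDist_le G z.2 p q z.2
        rw [SimpleGraph.dist_self] at hbase
        omega
      · have hx' := dist_split hG huniq hxK hσ
        have hbase := fermatDist_le G z.2 p q σ
        have e1 : G.dist σ z.1 = G.dist z.1 σ := SimpleGraph.dist_comm ..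
        have e2 : G.dist σ z.2 = G.dist z.2 σ := SimpleGraph.dist_comm ..
        omega
    have hfin : fermatEcc G z.2 ≤ fermatEcc G z.1 :=
      key.trans (fermatDist_le_fermatEcc G z.1 p q)
    have := hKL z.1 hxK
    omega
  -- (4) combine
  have hKcard : 1 ≤ K.card := Finset.card_pos.mpr ⟨u₀, hu₀K⟩
  have hsum : ∑ u ∈ K, G.degree u = P.card + BD.card := by
    rw [hPsum, hBDsum, ← Finset.sum_add_distrib]
    exact Finset.sum_congr rfl fun u _ => hdeg u
  omega
lemma resWalk_mem {L : Finset V} {a b : V} (w : (resGraph G L).Walk a b) (ha : a ∈ L) :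
    b ∈ L := by
  induction w with
  | nil => exact ha
  | cons h p ih => exact ih h.2.2

lemma sum_deg_region [Fintype V] [DecidableEq V] [DecidableRel G.Adj] (hG : G.Connected) (t : ℕ)
    (hS : ∃ s : V, t < fermatEcc G s) :
    ∀ (M : Finset V), (∀ u ∈ M, fermatEcc G u ≤ t) →
      (∀ a ∈ M, ∀ b, (resGraph G (univ.filter (fun u => fermatEcc G u ≤ t))).Reachable a b →
        b ∈ M) →
      2 * M.card ≤ ∑ u ∈ M, G.degree u := by
  classical
  intro M
  induction M using Finset.strongInduction with
  | _ M ih =>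
    intro hML hMclose
    rcases M.eq_empty_or_nonempty with rfl | ⟨u₀, hu₀⟩
    · simp
    · set H := resGraph G (univ.filter (fun u => fermatEcc G u ≤ t)) with hH
      haveI : DecidablePred (H.Reachable u₀) := fun _ => Classical.dec _
      set K : Finset V := univ.filter (fun v => H.Reachable u₀ v) with hK
      have hKM : K ⊆ M := fun v hv => hMclose u₀ hu₀ v (by
        simp only [hK, Finset.mem_filter] at hv
        exact hv.2)
      have hu₀K : u₀ ∈ K := by
        simp only [hK, Finset.mem_filter, Finset.mem_univ, true_and]
        exact SimpleGraph.Reachable.refl u₀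
      have hcb := comp_bound hG t hS u₀ K hu₀K (fun u hu => hML u (hKM hu))
        (fun v hv => by
          simp only [hK, Finset.mem_filter] at hv
          exact hv.2)
        (fun u hu v hadj hle => by
          simp only [hK, Finset.mem_filter, Finset.mem_univ, true_and] at hu ⊢
          refine hu.trans (SimpleGraph.Adj.reachable ⟨hadj, ?_, ?_⟩) <;>
            simp only [Finset.mem_filter, Finset.mem_univ, true_and]
          · exact hML u (hKM (by
              simp only [hK, Finset.mem_filter, Finset.mem_univ, true_and]; exact hu))
          · exact hle)
      have hssub : M \ K ⊂ M := Finset.sdiff_ssubset hKM ⟨u₀, hu₀K⟩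
      have hrec := ih (M \ K) hssub
        (fun u hu => hML u (Finset.mem_sdiff.mp hu).1)
        (fun a ha b hr => by
          obtain ⟨haM, haK⟩ := Finset.mem_sdiff.mp ha
          refine Finset.mem_sdiff.mpr ⟨hMclose a haM b hr, fun hbK => haK ?_⟩
          simp only [hK, Finset.mem_filter, Finset.mem_univ, true_and] at hbK ⊢
          exact hbK.trans hr.symm)
      have hcards : (M \ K).card = M.card - K.card := Finset.card_sdiff_of_subset hKM
      have hKcard : K.card ≤ M.card := Finset.card_le_card hKM
      have hsums : ∑ u ∈ M \ K, G.degree u + ∑ u ∈ K, G.degree u = ∑ u ∈ M, G.degree u :=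
        Finset.sum_sdiff hKM
      omega

lemma threshold_bound [Fintype V] [DecidableEq V] [DecidableRel G.Adj] (hG : G.Connected)
    (hn : ∑ v : V, G.degree v = 2 * Fintype.card V) (t : ℕ) :
    ∑ u ∈ univ.filter (fun u => t < fermatEcc G u), G.degree u
      ≤ 2 * (univ.filter (fun u => t < fermatEcc G u)).card := by
  classical
  by_cases hS : ∃ s : V, t < fermatEcc G s
  · have hpart : ∑ u ∈ univ.filter (fun u => t < fermatEcc G u), G.degree u
        + ∑ u ∈ univ.filter (fun u => ¬ t < fermatEcc G u), G.degree u
        = ∑ v : V, G.degree v := Finset.sum_filter_add_sum_filter_not _ _ _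
    have hcpart : (univ.filter (fun u => t < fermatEcc G u)).card
        + (univ.filter (fun u => ¬ t < fermatEcc G u)).card = Fintype.card V := by
      rw [Finset.card_filter_add_card_filter_not, Finset.card_univ]
    have hfe : univ.filter (fun u : V => ¬ t < fermatEcc G u)
        = univ.filter (fun u : V => fermatEcc G u ≤ t) := by
      apply Finset.filter_congr
      intro u _
      simp [Nat.not_lt]
    have hL2 := sum_deg_region hG t hS (univ.filter (fun u => fermatEcc G u ≤ t))
      (fun u hu => (Finset.mem_filter.mp hu).2)
      (fun a ha b hr => by
        obtain ⟨w⟩ := hr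
        exact Finset.mem_filter.mpr ⟨mem_univ b, (Finset.mem_filter.mp
          (resWalk_mem w ha)).2⟩)
    rw [hfe] at hpart hcpart
    omega
  · push_neg at hS
    have : univ.filter (fun u : V => t < fermatEcc G u) = ∅ := by
      apply Finset.filter_false_of_mem
      intro u _
      exact Nat.not_lt.mpr (hS u)
    simp [this]

lemma sq_sum_odd (n : ℕ) : ∑ t ∈ Finset.range n, (2 * t + 1) = n ^ 2 := by
  induction n with
  | zero => simp
  | succ n ih => rw [Finset.sum_range_succ, ih]; ring

lemma layer_cake [Fintype V] [DecidableEq V] [DecidableRel G.Adj] (hG : G.Connected)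
    (hn : ∑ v : V, G.degree v = 2 * Fintype.card V) :
    ∑ u : V, G.degree u * fermatEcc G u ^ 2 ≤ 2 * ∑ u : V, fermatEcc G u ^ 2 := by
  classical
  set M := (univ.sup (fermatEcc G)) + 1 with hM
  have hlt : ∀ u : V, fermatEcc G u < M := fun u =>
    Nat.lt_succ_of_le (Finset.le_sup (mem_univ u))
  have hexp : ∀ (c : ℕ) (u : V), c * fermatEcc G u ^ 2
      = ∑ t ∈ Finset.range M, (if t < fermatEcc G u then c * (2 * t + 1) else 0) := by
    intro c u
    rw [← Finset.sum_filter]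
    have he : (Finset.range M).filter (fun t => t < fermatEcc G u)
        = Finset.range (fermatEcc G u) := by
      ext t'
      simp only [Finset.mem_filter, Finset.mem_range]
      exact ⟨fun h => h.2, fun h => ⟨h.trans (hlt u), h⟩⟩
    rw [he, ← Finset.mul_sum, sq_sum_odd]
  calc ∑ u : V, G.degree u * fermatEcc G u ^ 2
      = ∑ t ∈ Finset.range M, ∑ u : V,
          (if t < fermatEcc G u then G.degree u * (2 * t + 1) else 0) := by
        rw [Finset.sum_comm]
        exact Finset.sum_congr rfl fun u _ => hexp (G.degree u) u
    _ ≤ ∑ t ∈ Finset.range M, ∑ u : V,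
          (if t < fermatEcc G u then 2 * (2 * t + 1) else 0) := by
        apply Finset.sum_le_sum
        intro t _
        rw [← Finset.sum_filter, ← Finset.sum_filter, ← Finset.sum_mul]
        have hc : ∑ _u ∈ univ.filter (fun u : V => t < fermatEcc G u), 2 * (2 * t + 1)
            = (2 * (univ.filter (fun u : V => t < fermatEcc G u)).card) * (2 * t + 1) := by
          rw [Finset.sum_const, smul_eq_mul]; ring
        rw [hc]
        exact Nat.mul_le_mul_right _ (threshold_bound hG hn t)
    _ = 2 * ∑ u : V, fermatEcc G u ^ 2 := by
        rw [Finset.sum_comm, Finset.mul_sum]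
        exact Finset.sum_congr rfl fun u _ => (hexp 2 u).symm

lemma two_mul_le_sq_add (a b : ℕ) : 2 * (a * b) ≤ a ^ 2 + b ^ 2 := by
  zify
  nlinarith [sq_nonneg ((a : ℤ) - b)]

lemma dart_sum_fst [Fintype V] [DecidableEq V] [DecidableRel G.Adj] (g : V → ℕ) :
    ∑ d : G.Dart, g d.fst = ∑ v : V, G.degree v * g v := by
  rw [← Finset.sum_fiberwise_of_maps_to (g := fun d : G.Dart => d.fst) (t := univ)
    (fun d _ => mem_univ _)]
  apply Finset.sum_congr rfl
  intro v _
  have hcongr : ∀ d ∈ univ.filter (fun d : G.Dart => d.fst = v), g d.fst = g v := by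
    intro d hd
    rw [(Finset.mem_filter.mp hd).2]
  rw [Finset.sum_congr rfl hcongr, Finset.sum_const, smul_eq_mul,
    ← SimpleGraph.dart_fst_fiber_card_eq_degree]

lemma dart_sum_edge [Fintype V] [DecidableEq V] [DecidableRel G.Adj] (g : V → ℕ) :
    ∑ d : G.Dart, g d.fst
      = ∑ e ∈ G.edgeFinset, Sym2.lift ⟨fun u v => g u + g v, fun _ _ => add_comm _ _⟩ e := by
  rw [← Finset.sum_fiberwise_of_maps_to (g := fun d : G.Dart => d.edge) (t := G.edgeFinset)
    (fun d _ => by rw [mem_edgeFinset]; exact d.edge_mem)]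
  apply Finset.sum_congr rfl
  intro e he
  rw [mem_edgeFinset] at he
  induction e with
  | _ u v =>
    let d0 : G.Dart := ⟨(u, v), he⟩
    have hfib : univ.filter (fun d : G.Dart => d.edge = s(u, v)) = {d0, d0.symm} :=
      d0.edge_fiber
    rw [hfib, Finset.sum_pair d0.symm_ne.symm]
    simp [d0, SimpleGraph.Dart.symm]

lemma stepA [Fintype V] [DecidableEq V] [DecidableRel G.Adj] :
    2 * ∑ e ∈ G.edgeFinset,
        Sym2.lift ⟨fun u v => fermatEcc G u * fermatEcc G v, fun _ _ => mul_comm _ _⟩ e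
      ≤ ∑ u : V, G.degree u * fermatEcc G u ^ 2 := by
  rw [← dart_sum_fst (fun u => fermatEcc G u ^ 2),
    dart_sum_edge (G := G) (fun u => fermatEcc G u ^ 2), Finset.mul_sum]
  apply Finset.sum_le_sum
  intro e he
  induction e with
  | _ u v => simpa using two_mul_le_sq_add (fermatEcc G u) (fermatEcc G v)

/-- Main inequality: `F₂ ≤ F₁` for connected graphs with `m = n`. -/
lemma F2_le_F1_aux [Fintype V] [DecidableEq V] [DecidableRel G.Adj] (hG : G.Connected)
    (huni : G.edgeFinset.card = Fintype.card V) :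
    ∑ e ∈ G.edgeFinset,
        Sym2.lift ⟨fun u v => fermatEcc G u * fermatEcc G v, fun _ _ => mul_comm _ _⟩ e
      ≤ ∑ u : V, fermatEcc G u ^ 2 := by
  have hn : ∑ v : V, G.degree v = 2 * Fintype.card V := by
    rw [SimpleGraph.sum_degrees_eq_twice_card_edges, huni]
  have h1 := stepA (G := G)
  have h2 := layer_cake hG hn
  omega

end Aux

/-- For every finite connected unicyclic graph `G` (connected with `m = n`),
`F₂(G)/m ≤ F₁(G)/n`. -/
theorem avg_F2_le_avg_F1_of_unicyclic [Fintype V] (G : SimpleGraph V) (hG : G.Connected)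
    (huni : numEdges G = Fintype.card V) :
    (F2 G : ℚ) / (numEdges G : ℚ) ≤ (F1 G : ℚ) / (Fintype.card V : ℚ) := by
  letI := Classical.decEq V
  letI := Classical.decRel G.Adj
  have hNE : Nonempty V := hG.nonempty
  have huni' : G.edgeFinset.card = Fintype.card V := huni
  have hkey : F2 G ≤ F1 G := F2_le_F1_aux hG huni'
  have hnum : numEdges G = Fintype.card V := huni
  rw [hnum]
  have hpos : (0 : ℚ) < (Fintype.card V : ℚ) := by
    exact_mod_cast Fintype.card_pos
  gcongr
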